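/- arXiv:1807.10101 — 3 statements merged into one kernel-verified Lean document; each statement's English description precedes it below -/
import Mathlib

section
/- For all positive reals ρ₁, ρ₂ and every natural number k, the sum over all pairs (m, n) of natural numbers with m + n = k of B(ρ₁+n, ρ₂+m) · (m+n)! / (B(ρ₁,ρ₂) · n! · m!) equals 1. -/
/-- The Beta function `B(x,y) = Γ(x)Γ(y)/Γ(x+y)`. -/
noncomputable def betaFn (x y : ℝ) : ℝ :=
  Real.Gamma x * Real.Gamma y / Real.Gamma (x + y)

lemma betaFn_pos {x y : ℝ} (hx : 0 < x) (hy : 0 < y) : 0 < betaFn x y := by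
  have := Real.Gamma_pos_of_pos hx
  have := Real.Gamma_pos_of_pos hy
  have := Real.Gamma_pos_of_pos (by linarith : (0:ℝ) < x + y)
  unfold betaFn
  positivity

lemma betaFn_rec {x y : ℝ} (hx : 0 < x) (hy : 0 < y) :
    betaFn x y = betaFn (x + 1) y + betaFn x (y + 1) := by
  have hxy : (0:ℝ) < x + y := by linarith
  have h1 : x + 1 + y = (x + y) + 1 := by ring
  have h2 : x + (y + 1) = (x + y) + 1 := by ring
  unfold betaFn
  rw [h1, h2, Real.Gamma_add_one hx.ne', Real.Gamma_add_one hy.ne',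
    Real.Gamma_add_one hxy.ne']
  have hG := (Real.Gamma_pos_of_pos hxy).ne'
  field_simp

lemma key (k : ℕ) : ∀ x y : ℝ, 0 < x → 0 < y →
    ∑ p ∈ Finset.HasAntidiagonal.antidiagonal k, (k.choose p.2 : ℝ) * betaFn (x + p.2) (y + p.1)
      = betaFn x y := by
  induction k with
  | zero => intro x y hx hy; simp
  | succ k ih =>
      intro x y hx hy
      have hT : ∑ p ∈ Finset.HasAntidiagonal.antidiagonal (k+1),
          (k.choose p.2 : ℝ) * betaFn (x + p.2) (y + p.1)
          = (k.choose 0 : ℝ) * betaFn (x + 0) (y + (k+1))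
            + ∑ p ∈ Finset.HasAntidiagonal.antidiagonal k,
              (k.choose (p.2+1) : ℝ) * betaFn (x + (p.2+1)) (y + p.1) := by
        rw [Finset.Nat.sum_antidiagonal_succ'
          (f := fun p => (k.choose p.2 : ℝ) * betaFn (x + p.2) (y + p.1))]
        push_cast
        simp
      have hT' : ∑ p ∈ Finset.HasAntidiagonal.antidiagonal (k+1),
          (k.choose p.2 : ℝ) * betaFn (x + p.2) (y + p.1)
          = ∑ p ∈ Finset.HasAntidiagonal.antidiagonal k,
              (k.choose p.2 : ℝ) * betaFn (x + p.2) ((y+1) + p.1) := by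
        rw [Finset.Nat.sum_antidiagonal_succ
          (f := fun p => (k.choose p.2 : ℝ) * betaFn (x + p.2) (y + p.1))]
        rw [Nat.choose_succ_self]
        simp only [Nat.cast_zero, zero_mul, zero_add]
        apply Finset.sum_congr rfl
        intro p _
        push_cast
        ring_nf
      rw [Finset.Nat.sum_antidiagonal_succ'
        (f := fun p => ((k+1).choose p.2 : ℝ) * betaFn (x + p.2) (y + p.1))]
      simp only [Nat.choose_zero_right, Nat.cast_one, Nat.cast_zero, one_mul]
      have hsplit : ∑ p ∈ Finset.HasAntidiagonal.antidiagonal k,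
          ((k+1).choose (p.2+1) : ℝ) * betaFn (x + (p.2+1)) (y + p.1)
          = (∑ p ∈ Finset.HasAntidiagonal.antidiagonal k,
              (k.choose p.2 : ℝ) * betaFn ((x+1) + p.2) (y + p.1))
            + ∑ p ∈ Finset.HasAntidiagonal.antidiagonal k,
              (k.choose (p.2+1) : ℝ) * betaFn (x + (p.2+1)) (y + p.1) := by
        rw [← Finset.sum_add_distrib]
        apply Finset.sum_congr rfl
        intro p _
        have hc : (((k+1).choose (p.2+1) : ℕ) : ℝ)
            = (k.choose p.2 : ℝ) + (k.choose (p.2+1) : ℝ) := by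
          exact_mod_cast Nat.choose_succ_succ k p.2
        rw [hc]
        ring_nf
      have e0 : ∑ p ∈ Finset.HasAntidiagonal.antidiagonal k,
          (k.choose (p.2+1) : ℝ) * betaFn (x + (p.2+1)) (y + p.1)
          = betaFn x (y+1) - betaFn x (y + (k+1)) := by
        have := hT.symm.trans hT'
        have hy1 : (0:ℝ) < y + 1 := by linarith
        rw [ih x (y+1) hx hy1] at this
        simp only [Nat.choose_zero_right, Nat.cast_one, Nat.cast_zero, one_mul,
          add_zero] at this
        linarith
      simp only [Nat.cast_zero, add_zero] at hsplit ⊢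
      push_cast at hsplit ⊢
      rw [hsplit, ih (x+1) y (by linarith) hy, e0]
      have := betaFn_rec hx hy
      linarith

theorem beta_antidiagonal_sum (ρ₁ ρ₂ : ℝ) (hρ₁ : 0 < ρ₁) (hρ₂ : 0 < ρ₂) (k : ℕ) :
    ∑ p ∈ Finset.HasAntidiagonal.antidiagonal k,
      betaFn (ρ₁ + p.2) (ρ₂ + p.1) * (p.1 + p.2).factorial /
        (betaFn ρ₁ ρ₂ * p.2.factorial * p.1.factorial) = 1 := by
  have hB := betaFn_pos hρ₁ hρ₂
  have : ∑ p ∈ Finset.HasAntidiagonal.antidiagonal k,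
      betaFn (ρ₁ + p.2) (ρ₂ + p.1) * (p.1 + p.2).factorial /
        (betaFn ρ₁ ρ₂ * p.2.factorial * p.1.factorial)
      = (∑ p ∈ Finset.HasAntidiagonal.antidiagonal k,
          (k.choose p.2 : ℝ) * betaFn (ρ₁ + p.2) (ρ₂ + p.1)) / betaFn ρ₁ ρ₂ := by
    rw [Finset.sum_div]
    apply Finset.sum_congr rfl
    intro p hp
    have hpk : p.1 + p.2 = k := Finset.HasAntidiagonal.mem_antidiagonal.mp hp
    have hch : (p.1 + p.2).choose p.2 * p.1.factorial * p.2.factorial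
        = (p.1 + p.2).factorial :=
      Nat.add_choose_mul_factorial_mul_factorial p.1 p.2
    rw [← hpk, ← hch]
    have h2 : (0:ℝ) < p.2.factorial := by positivity
    have h1 : (0:ℝ) < p.1.factorial := by positivity
    push_cast
    field_simp
  rw [this, key k ρ₁ ρ₂ hρ₁ hρ₂, div_self hB.ne']
end

section
/- Let f be continuous on [c, d] and let α, β, ω, ρ, κ be reals with α > 0, β > 0, κ > 0, κ - α < 1, ρ > 0. Then for x ∈ [c, d], the generalised Prabhakar integral ∫_c^x (x-t)^{β-1} E^{ρ,κ}_{α,β}(ω(x-t)^α) f(t) dt equals the sum Σ_{n=0}^∞ (Γ(ρ+κn) ωⁿ / (Γ(ρ) n!)) · (I_c^{αn+β} f)(x), where I_c^γ denotes the Riemann–Liouville fractional integral of order γ, and the series converges. -/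
open Real Set Filter MeasureTheory intervalIntegral

open Real Set

lemma Gamma_add_nat_le {x : ℝ} (hx : 0 < x) (m : ℕ) :
    Real.Gamma (x + m) ≤ Real.Gamma x * (x + m) ^ m := by
  induction m with
  | zero => simp
  | succ m ih =>
    have hxm : (0:ℝ) < x + m := by positivity
    have h1 : Real.Gamma (x + (m+1:ℕ)) = (x + m) * Real.Gamma (x + m) := by
      push_cast
      rw [show x + ((m:ℝ)+1) = (x + m) + 1 by ring, Real.Gamma_add_one hxm.ne']
    rw [h1]
    push_cast
    calc (x + m) * Real.Gamma (x + m) ≤ (x + m) * (Real.Gamma x * (x + m) ^ m) := by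
          exact mul_le_mul_of_nonneg_left ih hxm.le
      _ = Real.Gamma x * (x + m) ^ (m+1) := by ring
      _ ≤ Real.Gamma x * (x + ((m:ℝ) + 1)) ^ (m+1) :=
          mul_le_mul_of_nonneg_left
            (pow_le_pow_left₀ hxm.le (by linarith) _) (Real.Gamma_pos_of_pos hx).le

lemma gamma_ratio_upper {x s : ℝ} (hx : 1 ≤ x) (hs : 0 < s) :
    Real.Gamma (x + s) ≤ Real.Gamma x * (x + ⌈s⌉₊) ^ s := by
  set m : ℕ := ⌈s⌉₊ with hm
  have hsm : s ≤ (m:ℝ) := Nat.le_ceil s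
  have hm1 : 1 ≤ (m:ℝ) := by exact_mod_cast Nat.one_le_ceil_iff.2 hs
  have hx0 : (0:ℝ) < x := by linarith
  have hxm0 : (0:ℝ) < x + m := by linarith
  have hxs0 : (0:ℝ) < x + s := by linarith
  have hcx : Real.Gamma x > 0 := Real.Gamma_pos_of_pos hx0
  have hcxm : Real.Gamma (x+m) > 0 := Real.Gamma_pos_of_pos hxm0
  have hcxs : Real.Gamma (x+s) > 0 := Real.Gamma_pos_of_pos hxs0
  have hm0 : (0:ℝ) < m := by linarith
  have key : Real.log (Real.Gamma (x+s)) ≤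
      (1 - s/(m:ℝ)) * Real.log (Real.Gamma x) + (s/(m:ℝ)) * Real.log (Real.Gamma (x+m)) := by
    have hb1 : s/(m:ℝ) ≤ 1 := by rw [div_le_one hm0]; exact hsm
    have h := Real.convexOn_log_Gamma.2 (mem_Ioi.2 hx0) (mem_Ioi.2 hxm0)
      (by linarith : (0:ℝ) ≤ 1 - s/(m:ℝ)) (by positivity : (0:ℝ) ≤ s/(m:ℝ)) (by ring)
    have heq : (1 - s/(m:ℝ)) • x + (s/(m:ℝ)) • (x + (m:ℝ)) = x + s := by
      simp only [smul_eq_mul]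
      have hsm' : s/(m:ℝ)*m = s := div_mul_cancel₀ s hm0.ne'
      linear_combination hsm'
    rw [heq] at h
    simpa using h
  have hGm : Real.log (Real.Gamma (x+m)) ≤ Real.log (Real.Gamma x) + m * Real.log (x+m) := by
    calc Real.log (Real.Gamma (x+m)) ≤ Real.log (Real.Gamma x * (x+m)^m) :=
          Real.log_le_log hcxm (Gamma_add_nat_le hx0 m)
      _ = Real.log (Real.Gamma x) + m * Real.log (x+m) := by
          rw [Real.log_mul hcx.ne' (by positivity), Real.log_pow]
  have key2 : Real.log (Real.Gamma (x+s)) ≤ Real.log (Real.Gamma x) + s * Real.log (x+m) := by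
    calc Real.log (Real.Gamma (x+s)) ≤ (1 - s/(m:ℝ)) * Real.log (Real.Gamma x)
          + (s/(m:ℝ)) * Real.log (Real.Gamma (x+m)) := key
      _ ≤ (1 - s/(m:ℝ)) * Real.log (Real.Gamma x)
          + (s/(m:ℝ)) * (Real.log (Real.Gamma x) + m * Real.log (x+m)) :=
          add_le_add_right (mul_le_mul_of_nonneg_left hGm (by positivity)) _
      _ = Real.log (Real.Gamma x) + s * Real.log (x+m) := by
          field_simp
          ring
  calc Real.Gamma (x+s) = Real.exp (Real.log (Real.Gamma (x+s))) := (Real.exp_log hcxs).symm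
    _ ≤ Real.exp (Real.log (Real.Gamma x) + s * Real.log (x+m)) := Real.exp_le_exp.2 key2
    _ = Real.Gamma x * (x + m) ^ s := by
        rw [Real.exp_add, Real.exp_log hcx, Real.rpow_def_of_pos hxm0, mul_comm s]

lemma gamma_ratio_lower {x s : ℝ} (hx : 2 ≤ x) (hs : 0 < s) :
    Real.Gamma x * (x - 1) ^ s ≤ Real.Gamma (x + s) := by
  have hx1 : (0:ℝ) < x - 1 := by linarith
  have hx0 : (0:ℝ) < x := by linarith
  have hxs : (0:ℝ) < x + s := by linarith
  have hG1 : Real.Gamma (x-1) > 0 := Real.Gamma_pos_of_pos hx1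
  have hGx : Real.Gamma x > 0 := Real.Gamma_pos_of_pos hx0
  have hGxs : Real.Gamma (x+s) > 0 := Real.Gamma_pos_of_pos hxs
  have hrec : Real.Gamma x = (x-1) * Real.Gamma (x-1) := by
    nth_rewrite 1 [show x = (x-1)+1 by ring]
    rw [Real.Gamma_add_one hx1.ne']
  have hslope := Real.convexOn_log_Gamma.slope_mono_adjacent (mem_Ioi.2 hx1)
    (mem_Ioi.2 hxs) (by linarith : x - 1 < x) (by linarith : x < x + s)
  simp only [Function.comp] at hslope
  have h1 : (Real.log (Real.Gamma x) - Real.log (Real.Gamma (x-1))) / (x - (x-1))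
      = Real.log (x-1) := by
    rw [hrec, Real.log_mul hx1.ne' hG1.ne']
    simp
  rw [h1, show x + s - x = s by ring] at hslope
  have h2 := (le_div_iff₀ hs).mp hslope
  have key : Real.log (Real.Gamma x) + s * Real.log (x-1) ≤ Real.log (Real.Gamma (x+s)) := by
    nlinarith [h2]
  calc Real.Gamma x * (x-1) ^ s = Real.exp (Real.log (Real.Gamma x) + s * Real.log (x-1)) := by
        rw [Real.exp_add, Real.exp_log hGx, Real.rpow_def_of_pos hx1, mul_comm s]
    _ ≤ Real.exp (Real.log (Real.Gamma (x+s))) := Real.exp_le_exp.2 key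
    _ = Real.Gamma (x+s) := Real.exp_log hGxs

lemma phi_tendsto {α β ρ κ : ℝ} (hα : 0 < α) (hβ : 0 < β) (hκ : 0 < κ) (hκα : κ - α < 1)
    (hρ : 0 < ρ) (m : ℕ) :
    Tendsto (fun n : ℕ => (ρ + κ*n + m) ^ κ / ((α*n + β - 1) ^ α * (n+1))) atTop (nhds 0) := by
  set C : ℝ := (ρ + κ + m) ^ κ / (α/2) ^ α with hC
  have hψ : Tendsto (fun n : ℕ => C * (n:ℝ) ^ (κ - α - 1)) atTop (nhds 0) := by
    have h1 : Tendsto (fun y : ℝ => y ^ (κ - α - 1)) atTop (nhds 0) := by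
      rw [show κ - α - 1 = -(α + 1 - κ) by ring]
      exact tendsto_rpow_neg_atTop (by linarith)
    have h2 : Tendsto (fun n : ℕ => ((n:ℝ)) ^ (κ - α - 1)) atTop (nhds 0) :=
      h1.comp tendsto_natCast_atTop_atTop
    simpa using h2.const_mul C
  have hev : ∀ᶠ n : ℕ in atTop, 1 ≤ n ∧ (1 - β) ≤ (α/2) * n := by
    have : Tendsto (fun n : ℕ => (α/2) * n) atTop atTop :=
      (tendsto_natCast_atTop_atTop (R := ℝ)).const_mul_atTop (by positivity)
    filter_upwards [eventually_ge_atTop 1, this.eventually_ge_atTop (1 - β)] with n h1 h2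
    exact ⟨h1, h2⟩
  refine tendsto_of_tendsto_of_tendsto_of_le_of_le' tendsto_const_nhds hψ ?_ ?_
  · filter_upwards [hev] with n hn
    obtain ⟨h1, h2⟩ := hn
    have hn0 : (0:ℝ) < n := by exact_mod_cast h1
    have hb : (0:ℝ) < α*n + β - 1 := by nlinarith
    positivity
  · filter_upwards [hev] with n hn
    obtain ⟨h1, h2⟩ := hn
    have hn0 : (0:ℝ) < n := by exact_mod_cast h1
    have hnum : (ρ + κ*n + m) ^ κ ≤ (ρ + κ + m) ^ κ * (n:ℝ) ^ κ := by
      rw [← Real.mul_rpow (by positivity) hn0.le]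
      apply Real.rpow_le_rpow (by positivity) ?_ hκ.le
      have h1' : (1:ℝ) ≤ (n:ℝ) := by exact_mod_cast h1
      nlinarith [hρ.le, hκ.le, Nat.cast_nonneg (α := ℝ) m]
    have hden : (α/2) ^ α * (n:ℝ) ^ α * (n:ℝ) ≤ (α*n + β - 1) ^ α * ((n:ℝ)+1) := by
      have hb : (α/2) * n ≤ α*n + β - 1 := by linarith
      have h4 : ((α/2) * n) ^ α ≤ (α*n + β - 1) ^ α :=
        Real.rpow_le_rpow (by positivity) hb hα.le
      rw [Real.mul_rpow (by positivity) hn0.le] at h4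
      nlinarith [Real.rpow_pos_of_pos hn0 α, Real.rpow_pos_of_pos (show (0:ℝ) < α/2 by positivity) α]
    have hdpos : (0:ℝ) < (α/2) ^ α * (n:ℝ) ^ α * (n:ℝ) := by positivity
    calc (ρ + κ*n + m) ^ κ / ((α*n + β - 1) ^ α * (n+1))
        ≤ ((ρ + κ + m) ^ κ * (n:ℝ) ^ κ) / ((α/2) ^ α * (n:ℝ) ^ α * (n:ℝ)) :=
          div_le_div₀ (by positivity) hnum hdpos hden
      _ = C * (n:ℝ) ^ (κ - α - 1) := by
          have e : (n:ℝ)^κ = (n:ℝ)^(κ-α-1) * ((n:ℝ)^α * (n:ℝ)) := by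
            have e1 := Real.rpow_add hn0 (κ-α-1) (α+1)
            have e2 := Real.rpow_add hn0 α 1
            rw [Real.rpow_one] at e2
            rw [show (κ-α-1)+(α+1) = κ by ring, e2] at e1
            exact e1
          rw [hC, e]
          have hA : ((α/2):ℝ) ^ α ≠ 0 := by positivity
          field_simp

lemma sumA {α β ρ κ : ℝ} (hα : 0 < α) (hβ : 0 < β) (hκ : 0 < κ) (hκα : κ - α < 1)
    (hρ : 0 < ρ) {s : ℝ} (hs : 0 ≤ s) :
    Summable (fun n : ℕ => Real.Gamma (ρ + κ*n) * s^n / (Real.Gamma (α*n+β) * n.factorial)) := by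
  set m : ℕ := ⌈κ⌉₊
  apply summable_of_ratio_norm_eventually_le (r := 1/2) (by norm_num)
  have hev1 : ∀ᶠ n : ℕ in atTop, 1 ≤ ρ + κ*n := by
    have : Tendsto (fun n : ℕ => ρ + κ * n) atTop atTop :=
      tendsto_atTop_add_const_left _ _
        ((tendsto_natCast_atTop_atTop (R := ℝ)).const_mul_atTop hκ)
    exact this.eventually_ge_atTop 1
  have hev2 : ∀ᶠ n : ℕ in atTop, 2 ≤ α*n + β := by
    have : Tendsto (fun n : ℕ => α * n + β) atTop atTop :=
      tendsto_atTop_add_const_right _ _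
        ((tendsto_natCast_atTop_atTop (R := ℝ)).const_mul_atTop hα)
    exact this.eventually_ge_atTop 2
  have hev3 : ∀ᶠ n : ℕ in atTop,
      s * ((ρ + κ*n + m) ^ κ / ((α*n + β - 1) ^ α * (n+1))) ≤ 1/2 := by
    have h0 : (0:ℝ) < 1 / (2 * (s+1)) := by positivity
    filter_upwards [(phi_tendsto hα hβ hκ hκα hρ m).eventually
      (eventually_le_nhds h0)] with n hn
    have hs1 : s / (s+1) ≤ 1 := by
      rw [div_le_one (by linarith)]; linarith
    calc s * ((ρ + κ*n + m) ^ κ / ((α*n + β - 1) ^ α * (n+1)))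
        ≤ s * (1 / (2 * (s+1))) := by
          apply mul_le_mul_of_nonneg_left hn hs
      _ = s / (2*(s+1)) := by ring
      _ ≤ 1/2 := by
          rw [div_le_div_iff₀ (by positivity) two_pos]
          nlinarith
  filter_upwards [hev1, hev2, hev3] with n h1 h2 h3
  have hxp : (0:ℝ) < ρ + κ*n := by linarith
  have hyp : (0:ℝ) < α*n + β := by linarith
  have hy1 : (0:ℝ) < α*n + β - 1 := by linarith
  have hGx : 0 < Real.Gamma (ρ + κ*n) := Real.Gamma_pos_of_pos hxp
  have hGy : 0 < Real.Gamma (α*n + β) := Real.Gamma_pos_of_pos hyp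
  have e1 : ρ + κ*((n:ℕ)+1:ℕ) = (ρ + κ*n) + κ := by push_cast; ring
  have e2 : α*((n:ℕ)+1:ℕ) + β = (α*n + β) + α := by push_cast; ring
  have hup : Real.Gamma ((ρ + κ*n) + κ) ≤ Real.Gamma (ρ + κ*n) * (ρ + κ*n + m) ^ κ :=
    gamma_ratio_upper h1 hκ
  have hlo : Real.Gamma (α*n + β) * (α*n + β - 1) ^ α ≤ Real.Gamma ((α*n + β) + α) :=
    gamma_ratio_lower h2 hα
  have hGy' : 0 < Real.Gamma ((α*n+β) + α) := Real.Gamma_pos_of_pos (by linarith)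
  have hGx' : 0 < Real.Gamma ((ρ+κ*n) + κ) := Real.Gamma_pos_of_pos (by linarith)
  have hfact : ((n+1 : ℕ).factorial : ℝ) = (n+1) * (n.factorial : ℝ) := by
    push_cast [Nat.factorial_succ]; ring
  rw [Real.norm_eq_abs, Real.norm_eq_abs, e1, e2,
    abs_of_nonneg (by positivity), abs_of_nonneg (by positivity)]
  have hphi : (0:ℝ) ≤ (ρ + κ*n + m) ^ κ / ((α*n + β - 1) ^ α * (n+1)) := by positivity
  calc Real.Gamma ((ρ+κ*n)+κ) * s^(n+1) / (Real.Gamma ((α*n+β)+α) * ((n+1: ℕ).factorial))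
      ≤ (Real.Gamma (ρ+κ*n) * (ρ+κ*n+m)^κ) * (s^n * s)
          / ((Real.Gamma (α*n+β) * (α*n+β-1)^α) * (((n:ℝ)+1) * n.factorial)) := by
        rw [hfact, pow_succ]
        apply div_le_div₀ (by positivity)
        · apply mul_le_mul_of_nonneg_right hup (by positivity)
        · positivity
        · apply mul_le_mul_of_nonneg_right hlo (by positivity)
      _ = (s * ((ρ + κ*n + m) ^ κ / ((α*n + β - 1) ^ α * (n+1)))) *
          (Real.Gamma (ρ+κ*n) * s^n / (Real.Gamma (α*n+β) * n.factorial)) := by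
        field_simp
      _ ≤ (1/2) * (Real.Gamma (ρ+κ*n) * s^n / (Real.Gamma (α*n+β) * n.factorial)) :=
        mul_le_mul_of_nonneg_right h3 (by positivity)

/-- Riemann–Liouville fractional integral of order `γ` with base point `c`. -/
noncomputable def RL (c γ : ℝ) (f : ℝ → ℝ) (x : ℝ) : ℝ :=
  (1 / Real.Gamma γ) * ∫ t in c..x, (x - t) ^ (γ - 1) * f t

/-- Four-parameter generalised Mittag-Leffler function `E^{ρ,κ}_{α,β}`. -/
noncomputable def ML4 (α β ρ κ : ℝ) (z : ℝ) : ℝ :=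
  ∑' n : ℕ, Real.Gamma (ρ + κ * n) * z ^ n /
    (Real.Gamma ρ * Real.Gamma (α * n + β) * n.factorial)

/-- Generalised Prabhakar fractional integral. -/
noncomputable def GPrab (α β ω ρ κ c : ℝ) (f : ℝ → ℝ) (x : ℝ) : ℝ :=
  ∫ t in c..x, (x - t) ^ (β - 1) * ML4 α β ρ κ (ω * (x - t) ^ α) * f t

theorem GPrab_series (c d α β ω ρ κ : ℝ)
    (hα : 0 < α) (hβ : 0 < β) (hκ : 0 < κ) (hκα : κ - α < 1) (hρ : 0 < ρ)
    (f : ℝ → ℝ) (hf : ContinuousOn f (Set.Icc c d)) :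
    ∀ x ∈ Set.Icc c d,
      HasSum (fun n : ℕ =>
          Real.Gamma (ρ + κ * n) * ω ^ n / (Real.Gamma ρ * n.factorial) *
            RL c (α * n + β) f x)
        (GPrab α β ω ρ κ c f x) := by
  intro x hx
  obtain ⟨hcx, hxd⟩ := hx
  obtain ⟨M, hM⟩ := (isCompact_Icc (a := c) (b := d)).exists_bound_of_continuousOn hf
  have hM0 : 0 ≤ M := le_trans (norm_nonneg _) (hM x ⟨hcx, hxd⟩)
  have hΓρ : 0 < Real.Gamma ρ := Real.Gamma_pos_of_pos hρ
  -- the summand functions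
  set F : ℕ → ℝ → ℝ := fun n t =>
    Real.Gamma (ρ + κ*n) * ω^n / (Real.Gamma ρ * Real.Gamma (α*n+β) * n.factorial) *
      ((x - t) ^ (α*n+β-1) * f t) with hF
  have hγpos : ∀ n : ℕ, 0 < α*n+β := fun n => by positivity
  have hΓγ : ∀ n : ℕ, 0 < Real.Gamma (α*n+β) := fun n => Real.Gamma_pos_of_pos (hγpos n)
  have hcont : ContinuousOn f (Set.uIcc c x) := by
    apply hf.mono
    rw [uIcc_of_le hcx]
    exact Icc_subset_Icc le_rfl hxd
  -- interval integrability of the kernel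
  have hker : ∀ r : ℝ, -1 < r → IntervalIntegrable (fun t => (x - t) ^ r) volume c x := by
    intro r hr
    have h0 := (intervalIntegral.intervalIntegrable_rpow' hr (a := x - c) (b := 0)).comp_sub_left x
    simpa using h0
  have hkerf : ∀ n : ℕ, IntervalIntegrable (fun t => (x - t) ^ (α*n+β-1) * f t) volume c x := by
    intro n
    exact (hker _ (by have := hγpos n; linarith)).mul_continuousOn hcont
  have hFint : ∀ n : ℕ, IntegrableOn (F n) (Ioc c x) := by
    intro n
    apply Integrable.const_mul
    exact (intervalIntegrable_iff_integrableOn_Ioc_of_le hcx).mp (hkerf n)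
  -- value of the kernel integral
  have hkerval : ∀ r : ℝ, -1 < r → (∫ t in c..x, (x - t) ^ r) = (x - c) ^ (r+1) / (r+1) := by
    intro r hr
    rw [intervalIntegral.integral_comp_sub_left (fun u => u ^ r) x, sub_self,
      integral_rpow (Or.inl hr), Real.zero_rpow (by linarith : r + 1 ≠ 0), sub_zero]
  -- bound for the norm integrals
  set K : ℝ := M * (x - c) ^ β / (β * Real.Gamma ρ) with hK
  set r0 : ℝ := |ω| * (x - c) ^ α with hr0
  have hxc : 0 ≤ x - c := by linarith
  have hnormb : ∀ n : ℕ, (∫ t in Ioc c x, ‖F n t‖) ≤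
      K * (Real.Gamma (ρ + κ*n) * r0^n / (Real.Gamma (α*n+β) * n.factorial)) := by
    intro n
    have hC : ∀ t, ‖F n t‖ = ‖Real.Gamma (ρ + κ*n) * ω^n /
        (Real.Gamma ρ * Real.Gamma (α*n+β) * n.factorial)‖ * ‖(x - t) ^ (α*n+β-1) * f t‖ := by
      intro t; rw [hF]; simp [norm_mul]
    calc (∫ t in Ioc c x, ‖F n t‖)
        = ‖Real.Gamma (ρ + κ*n) * ω^n / (Real.Gamma ρ * Real.Gamma (α*n+β) * n.factorial)‖ *
          ∫ t in Ioc c x, ‖(x - t) ^ (α*n+β-1) * f t‖ := by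
          simp_rw [hC]
          exact integral_const_mul _ _
      _ ≤ ‖Real.Gamma (ρ + κ*n) * ω^n / (Real.Gamma ρ * Real.Gamma (α*n+β) * n.factorial)‖ *
          ∫ t in Ioc c x, (x - t) ^ (α*n+β-1) * M := by
          apply mul_le_mul_of_nonneg_left ?_ (norm_nonneg _)
          apply setIntegral_mono_on
          · exact ((intervalIntegrable_iff_integrableOn_Ioc_of_le hcx).mp (hkerf n)).norm
          · exact ((intervalIntegrable_iff_integrableOn_Ioc_of_le hcx).mp
              ((hker _ (by have := hγpos n; linarith)).mul_continuousOn continuousOn_const))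
          · exact measurableSet_Ioc
          · intro t ht
            have h1 : 0 ≤ (x - t) ^ (α*n+β-1) := Real.rpow_nonneg (by linarith [ht.2]) _
            rw [norm_mul, Real.norm_eq_abs ((x-t)^(α*n+β-1)), abs_of_nonneg h1]
            exact mul_le_mul_of_nonneg_left (hM t ⟨le_of_lt ht.1, le_trans ht.2 hxd⟩) h1
      _ ≤ K * (Real.Gamma (ρ + κ*n) * r0^n / (Real.Gamma (α*n+β) * n.factorial)) := by
          have hIoc : (∫ t in Ioc c x, (x - t) ^ (α*n+β-1) * M)
              = ((x - c) ^ (α*n+β) / (α*n+β)) * M := by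
            rw [← intervalIntegral.integral_of_le hcx, intervalIntegral.integral_mul_const,
              hkerval _ (by have := hγpos n; linarith)]
            ring_nf
          rw [hIoc]
          have hnorm : ‖Real.Gamma (ρ + κ*n) * ω^n /
              (Real.Gamma ρ * Real.Gamma (α*n+β) * n.factorial)‖
              = Real.Gamma (ρ + κ*n) * |ω|^n /
              (Real.Gamma ρ * Real.Gamma (α*n+β) * n.factorial) := by
            rw [Real.norm_eq_abs, abs_div, abs_mul, abs_pow,
              abs_of_pos (Real.Gamma_pos_of_pos (by positivity : (0:ℝ) < ρ + κ*n)),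
              abs_of_pos (by positivity : (0:ℝ) < Real.Gamma ρ * Real.Gamma (α*n+β) * n.factorial)]
          rw [hnorm]
          -- expand (x-c)^(α n + β) = ((x-c)^α)^n * (x-c)^β
          have hexp : (x - c) ^ (α*n+β) = ((x - c) ^ α)^n * (x - c) ^ β := by
            rw [Real.rpow_add' hxc (by positivity : α*(n:ℝ)+β ≠ 0)]
            congr 1
            rw [← Real.rpow_natCast ((x-c) ^ α) n, ← Real.rpow_mul hxc]
          rw [hexp, hr0, hK, mul_pow]
          have h1 : (0:ℝ) < (n.factorial : ℝ) := by exact_mod_cast n.factorial_pos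
          have hβγ : 1 / (α*n+β) ≤ 1/β := by
            apply one_div_le_one_div_of_le hβ
            have : 0 ≤ α * n := by positivity
            linarith
          have hGpos := Real.Gamma_pos_of_pos (show (0:ℝ) < ρ + κ*n by positivity)
          set T : ℝ := Real.Gamma (ρ+κ*n) * |ω|^n * ((x-c)^α)^n * (x-c)^β * M /
            (Real.Gamma ρ * Real.Gamma (α*n+β) * n.factorial) with hT
          have hT0 : 0 ≤ T := by positivity
          have hne1 : Real.Gamma ρ ≠ 0 := hΓρ.ne'
          have hne2 : Real.Gamma (α*n+β) ≠ 0 := (hΓγ n).ne'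
          have hne3 : ((n.factorial : ℝ)) ≠ 0 := h1.ne'
          have hne4 : α*(n:ℝ)+β ≠ 0 := (hγpos n).ne'
          have eq1 : Real.Gamma (ρ + κ*n) * |ω|^n /
              (Real.Gamma ρ * Real.Gamma (α*n+β) * n.factorial) *
              (((x - c) ^ α)^n * (x - c) ^ β / (α*n+β) * M) = T * (1/(α*n+β)) := by
            rw [hT]; field_simp
          have eq2 : M * (x-c)^β / (β * Real.Gamma ρ) *
              (Real.Gamma (ρ + κ*n) * (|ω| * (x-c)^α)^n / (Real.Gamma (α*n+β) * n.factorial))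
              = T * (1/β) := by
            rw [hT, mul_pow]; field_simp
          calc Real.Gamma (ρ + κ*n) * |ω|^n /
              (Real.Gamma ρ * Real.Gamma (α*n+β) * n.factorial) *
              (((x - c) ^ α)^n * (x - c) ^ β / (α*n+β) * M)
              = T * (1/(α*n+β)) := eq1
            _ ≤ T * (1/β) := mul_le_mul_of_nonneg_left hβγ hT0
            _ = M * (x-c)^β / (β * Real.Gamma ρ) *
              (Real.Gamma (ρ + κ*n) * (|ω|^n * ((x-c)^α)^n) / (Real.Gamma (α*n+β) * n.factorial)) := by
              rw [mul_pow] at eq2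
              exact eq2.symm
  -- summability of the norm integrals
  have hr00 : (0:ℝ) ≤ r0 := by rw [hr0]; positivity
  have hsum : Summable (fun n : ℕ => ∫ t in Ioc c x, ‖F n t‖) :=
    Summable.of_nonneg_of_le (fun n => integral_nonneg fun t => norm_nonneg _) hnormb
      ((sumA hα hβ hκ hκα hρ hr00).mul_left K)
  have key := MeasureTheory.hasSum_integral_of_summable_integral_norm
    (μ := volume.restrict (Ioc c x)) (F := F) hFint hsum
  have hterm : ∀ n : ℕ, (∫ t in Ioc c x, F n t) =
      Real.Gamma (ρ + κ * n) * ω ^ n / (Real.Gamma ρ * n.factorial) *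
        RL c (α * n + β) f x := by
    intro n
    have h1 : 0 < (n.factorial : ℝ) := by exact_mod_cast n.factorial_pos
    simp only [RL, hF]
    rw [intervalIntegral.integral_of_le hcx, MeasureTheory.integral_const_mul]
    ring
  have hae : ∀ᵐ t : ℝ, t ≠ x := by
    have hset : {t : ℝ | ¬ t ≠ x} = {x} := by ext t; simp
    rw [ae_iff, hset]
    exact Real.volume_singleton
  have htsum : GPrab α β ω ρ κ c f x = ∫ t in Ioc c x, ∑' n, F n t := by
    simp only [GPrab]
    rw [intervalIntegral.integral_of_le hcx]
    apply setIntegral_congr_ae measurableSet_Ioc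
    filter_upwards [hae] with t htx hmem
    have htlt : 0 < x - t := by
      have := lt_of_le_of_ne hmem.2 htx
      linarith
    simp only [ML4, hF]
    rw [← tsum_mul_left, ← tsum_mul_right]
    apply tsum_congr
    intro n
    have hz : (ω * (x-t)^α)^n = ω^n * (x-t)^(α*n) := by
      rw [mul_pow, ← Real.rpow_natCast ((x-t)^α) n, ← Real.rpow_mul htlt.le]
    have hsplit : (x-t)^(β-1) * (x-t)^(α*n) = (x-t)^(α*n+β-1) := by
      rw [← Real.rpow_add htlt]
      ring_nf
    rw [hz, ← hsplit]
    ring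
  have hfun : (fun n : ℕ => Real.Gamma (ρ + κ * n) * ω ^ n /
      (Real.Gamma ρ * n.factorial) * RL c (α * n + β) f x)
      = fun n => ∫ t in Ioc c x, F n t := funext fun n => (hterm n).symm
  rw [hfun, htsum]
  exact key
end

section
/- Let f be continuous on [c, d], α > 0, β > 0, ρ > 0, ω ∈ ℝ, μ > 0. Then the Riemann–Liouville fractional integral of order μ commutes with the Prabhakar integral: I_c^μ (E^{ω,ρ}_{α,β;c+} f) = E^{ω,ρ}_{α,β;c+} (I_c^μ f) on [c, d]. -/
/-- Three-parameter Mittag-Leffler function `E^ρ_{α,β}`. -/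
noncomputable def ML3 (α β ρ : ℝ) (z : ℝ) : ℝ :=
  ∑' n : ℕ, Real.Gamma (ρ + n) * z ^ n /
    (Real.Gamma ρ * Real.Gamma (α * n + β) * n.factorial)

/-- Prabhakar fractional integral `E^{ω,ρ}_{α,β;c+}`. -/
noncomputable def Prab (α β ω ρ c : ℝ) (f : ℝ → ℝ) (x : ℝ) : ℝ :=
  ∫ t in c..x, (x - t) ^ (β - 1) * ML3 α β ρ (ω * (x - t) ^ α) * f t


open MeasureTheory intervalIntegral Set Filter

/-- Log-convexity estimate: `Γ(x) (x-1)^α ≤ Γ(x+α)` for `x > 1`, `α > 0`. -/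
lemma Gamma_ratio_lb {x a : ℝ} (hx : 1 < x) (ha : 0 < a) :
    Real.Gamma x * (x - 1) ^ a ≤ Real.Gamma (x + a) := by
  have h0 : (0:ℝ) < x - 1 := by linarith
  have m1 : x - 1 ∈ Set.Ioi (0:ℝ) := by simp only [Set.mem_Ioi]; linarith
  have m2 : x + a ∈ Set.Ioi (0:ℝ) := by simp only [Set.mem_Ioi]; linarith
  have l1 : x - 1 < x := by linarith
  have l2 : x < x + a := by linarith
  have hs := Real.convexOn_log_Gamma.slope_mono_adjacent m1 m2 l1 l2
  have hG : Real.Gamma x = (x - 1) * Real.Gamma (x - 1) := by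
    have := Real.Gamma_add_one (s := x - 1) h0.ne'
    rw [sub_add_cancel] at this
    exact this
  have hGpos : 0 < Real.Gamma (x - 1) := Real.Gamma_pos_of_pos h0
  have hGxpos : 0 < Real.Gamma x := Real.Gamma_pos_of_pos (by linarith)
  have hlog : Real.log (x - 1) ≤ (Real.log (Real.Gamma (x + a)) - Real.log (Real.Gamma x)) / a := by
    have : (Real.log (Real.Gamma x) - Real.log (Real.Gamma (x - 1))) / (x - (x - 1))
        ≤ (Real.log (Real.Gamma (x + a)) - Real.log (Real.Gamma x)) / (x + a - x) := hs
    simp only [Function.comp] at hs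
    have h1 : x - (x - 1) = 1 := by ring
    have h2 : x + a - x = a := by ring
    rw [h1, h2, div_one] at hs
    calc Real.log (x - 1)
        = Real.log (Real.Gamma x) - Real.log (Real.Gamma (x - 1)) := by
          rw [hG, Real.log_mul (by positivity) hGpos.ne']; ring
      _ ≤ _ := hs
  have key : a * Real.log (x - 1) ≤ Real.log (Real.Gamma (x + a)) - Real.log (Real.Gamma x) := by
    have := mul_le_mul_of_nonneg_left hlog ha.le
    rwa [mul_div_cancel₀ _ ha.ne'] at this
  have := Real.exp_le_exp.2 (by linarith : Real.log (Real.Gamma x) + a * Real.log (x - 1)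
      ≤ Real.log (Real.Gamma (x + a)))
  rw [Real.exp_add, Real.exp_log hGxpos, Real.exp_log (Real.Gamma_pos_of_pos (by linarith))] at this
  rw [show a * Real.log (x - 1) = Real.log (x - 1) * a by ring,
    ← Real.rpow_def_of_pos h0] at this
  exact this

/-- The three-parameter Mittag-Leffler series is (absolutely) summable everywhere. -/
lemma ML3_summable {α β ρ : ℝ} (hα : 0 < α) (hβ : 0 < β) (hρ : 0 < ρ) (z : ℝ) :
    Summable (fun n : ℕ => Real.Gamma (ρ + n) * z ^ n /
      (Real.Gamma ρ * Real.Gamma (α * n + β) * n.factorial)) := by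
  have hG : 0 < Real.Gamma ρ := Real.Gamma_pos_of_pos hρ
  have hQ : ∀ n : ℕ, 0 < Real.Gamma (α * n + β) := fun n =>
    Real.Gamma_pos_of_pos (by positivity)
  have hP : ∀ n : ℕ, 0 < Real.Gamma (ρ + n) := fun n => Real.Gamma_pos_of_pos (by positivity)
  have hD : ∀ n : ℕ, (0:ℝ) < Real.Gamma ρ * Real.Gamma (α * n + β) * n.factorial := by
    intro n
    have : (0:ℝ) < (n.factorial : ℝ) := by exact_mod_cast n.factorial_pos
    positivity
  have hnorm : ∀ m : ℕ, ‖Real.Gamma (ρ + m) * z ^ m /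
      (Real.Gamma ρ * Real.Gamma (α * m + β) * m.factorial)‖
      = Real.Gamma (ρ + m) * |z| ^ m /
        (Real.Gamma ρ * Real.Gamma (α * m + β) * m.factorial) := by
    intro m
    rw [Real.norm_eq_abs, abs_div, abs_mul, abs_pow, abs_of_pos (hP m), abs_of_pos (hD m)]
  apply summable_of_ratio_norm_eventually_le (r := 1/2) (by norm_num)
  have tlin : Tendsto (fun n : ℕ => α * n + (β - 1)) atTop atTop :=
    tendsto_atTop_add_const_right _ _
      (Filter.Tendsto.const_mul_atTop hα tendsto_natCast_atTop_atTop)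
  have t1 : Tendsto (fun n : ℕ => (α * n + (β - 1)) ^ (α : ℝ)) atTop atTop :=
    (tendsto_rpow_atTop hα).comp tlin
  filter_upwards [t1.eventually_ge_atTop (2 * (ρ + 1) * |z|),
    tlin.eventually_ge_atTop 1] with n h1 h2
  rw [show α * (n:ℝ) + (β - 1) = α * n + β - 1 from by ring] at h1 h2
  have hn0 : (0:ℝ) ≤ (n:ℝ) := Nat.cast_nonneg n
  have hb1 : (1:ℝ) < α * n + β := by linarith
  have hr : (0:ℝ) < (α * n + β - 1) ^ (α : ℝ) := Real.rpow_pos_of_pos (by linarith) _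
  have hgam : Real.Gamma (α * n + β) * (α * n + β - 1) ^ (α : ℝ)
      ≤ Real.Gamma (α * (n + 1 : ℕ) + β) := by
    have h := Gamma_ratio_lb hb1 hα
    have e : α * ((n : ℝ) + 1) + β = (α * n + β) + α := by ring
    rw [show ((n + 1 : ℕ) : ℝ) = (n : ℝ) + 1 from by push_cast; ring, e]
    exact h
  have key : (ρ + n) * |z| * Real.Gamma (α * n + β)
      ≤ 1/2 * ((n : ℝ) + 1) * Real.Gamma (α * (n + 1 : ℕ) + β) := by
    have h3 : ρ + (n:ℝ) ≤ (ρ + 1) * ((n:ℝ) + 1) := by nlinarith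
    calc (ρ + n) * |z| * Real.Gamma (α * n + β)
        ≤ ((ρ + 1) * ((n:ℝ) + 1)) * |z| * Real.Gamma (α * n + β) :=
          mul_le_mul_of_nonneg_right
            (mul_le_mul_of_nonneg_right h3 (abs_nonneg z)) (hQ n).le
      _ = (1/2 * ((n:ℝ)+1)) * (2 * (ρ+1) * |z|) * Real.Gamma (α * n + β) := by ring
      _ ≤ (1/2 * ((n:ℝ)+1)) * (α * n + β - 1) ^ (α : ℝ) * Real.Gamma (α * n + β) :=
          mul_le_mul_of_nonneg_right
            (mul_le_mul_of_nonneg_left h1 (by positivity)) (hQ n).le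
      _ = 1/2 * ((n:ℝ)+1) * (Real.Gamma (α * n + β) * (α * n + β - 1) ^ (α : ℝ)) := by ring
      _ ≤ 1/2 * ((n : ℝ) + 1) * Real.Gamma (α * (n + 1 : ℕ) + β) :=
          mul_le_mul_of_nonneg_left hgam (by positivity)
  have hGadd : Real.Gamma (ρ + (n + 1 : ℕ)) = (ρ + n) * Real.Gamma (ρ + n) := by
    rw [show (ρ + ((n + 1 : ℕ) : ℝ)) = (ρ + n) + 1 from by push_cast; ring]
    exact Real.Gamma_add_one (by positivity)
  rw [hnorm, hnorm, ← mul_div_assoc, div_le_div_iff₀ (hD (n+1)) (hD n), hGadd]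
  have hfac : (((n+1).factorial : ℕ) : ℝ) = ((n:ℝ) + 1) * (n.factorial : ℝ) := by
    rw [Nat.factorial_succ]; push_cast; ring
  rw [hfac, pow_succ]
  calc (ρ + ↑n) * Real.Gamma (ρ + ↑n) * (|z| ^ n * |z|) *
        (Real.Gamma ρ * Real.Gamma (α * ↑n + β) * ↑n.factorial)
      = (Real.Gamma (ρ + ↑n) * |z| ^ n * Real.Gamma ρ * ↑n.factorial) *
        ((ρ + ↑n) * |z| * Real.Gamma (α * ↑n + β)) := by ring
    _ ≤ (Real.Gamma (ρ + ↑n) * |z| ^ n * Real.Gamma ρ * ↑n.factorial) *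
        (1/2 * ((n:ℝ) + 1) * Real.Gamma (α * (n + 1 : ℕ) + β)) := by
        refine mul_le_mul_of_nonneg_left key ?_
        have : (0:ℝ) < (n.factorial : ℝ) := by exact_mod_cast n.factorial_pos
        positivity
    _ = 1/2 * (Real.Gamma (ρ + ↑n) * |z| ^ n) *
        (Real.Gamma ρ * Real.Gamma (α * ↑(n + 1) + β) * (((n:ℝ) + 1) * ↑n.factorial)) := by ring

noncomputable def ML3' (α β ρ : ℝ) (z : ℝ) : ℝ :=
  ∑' n : ℕ, Real.Gamma (ρ + n) * z ^ n /
    (Real.Gamma ρ * Real.Gamma (α * n + β) * n.factorial)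

lemma ML3'_norm_term {α β ρ : ℝ} (hα : 0 < α) (hβ : 0 < β) (hρ : 0 < ρ) (z : ℝ) (n : ℕ) :
    ‖Real.Gamma (ρ + n) * z ^ n / (Real.Gamma ρ * Real.Gamma (α * n + β) * n.factorial)‖
    = Real.Gamma (ρ + n) * |z| ^ n /
      (Real.Gamma ρ * Real.Gamma (α * n + β) * n.factorial) := by
  have hP : 0 < Real.Gamma (ρ + n) := Real.Gamma_pos_of_pos (by positivity)
  have hD : (0:ℝ) < Real.Gamma ρ * Real.Gamma (α * n + β) * n.factorial := by
    have h1 : 0 < Real.Gamma ρ := Real.Gamma_pos_of_pos hρ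
    have h2 : 0 < Real.Gamma (α * n + β) := Real.Gamma_pos_of_pos (by positivity)
    have h3 : (0:ℝ) < (n.factorial : ℝ) := by exact_mod_cast n.factorial_pos
    positivity
  rw [Real.norm_eq_abs, abs_div, abs_mul, abs_pow, abs_of_pos hP, abs_of_pos hD]

lemma ML3'_abs_le {α β ρ : ℝ} (hα : 0 < α) (hβ : 0 < β) (hρ : 0 < ρ) {R z : ℝ}
    (hz : |z| ≤ R) : |ML3' α β ρ z| ≤ ML3' α β ρ R := by
  have hR : 0 ≤ R := (abs_nonneg z).trans hz
  have hsum : Summable (fun n : ℕ => ‖Real.Gamma (ρ + n) * z ^ n /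
      (Real.Gamma ρ * Real.Gamma (α * n + β) * n.factorial)‖) := by
    have := ML3_summable hα hβ hρ |z|
    refine this.congr fun n => ?_
    rw [ML3'_norm_term hα hβ hρ]
  calc |ML3' α β ρ z| ≤ ∑' n : ℕ, ‖Real.Gamma (ρ + n) * z ^ n /
        (Real.Gamma ρ * Real.Gamma (α * n + β) * n.factorial)‖ := by
        rw [← Real.norm_eq_abs]; exact norm_tsum_le_tsum_norm hsum
    _ ≤ ML3' α β ρ R := by
        refine Summable.tsum_le_tsum (fun n => ?_) hsum (ML3_summable hα hβ hρ R)
        rw [ML3'_norm_term hα hβ hρ]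
        have hP : 0 < Real.Gamma (ρ + n) := Real.Gamma_pos_of_pos (by positivity)
        have hD : (0:ℝ) < Real.Gamma ρ * Real.Gamma (α * n + β) * n.factorial := by
          have h1 : 0 < Real.Gamma ρ := Real.Gamma_pos_of_pos hρ
          have h2 : 0 < Real.Gamma (α * n + β) := Real.Gamma_pos_of_pos (by positivity)
          have h3 : (0:ℝ) < (n.factorial : ℝ) := by exact_mod_cast n.factorial_pos
          positivity
        have hzR : |z| ^ n ≤ R ^ n := pow_le_pow_left₀ (abs_nonneg z) hz n
        gcongr
    
lemma ML3'_continuous {α β ρ : ℝ} (hα : 0 < α) (hβ : 0 < β) (hρ : 0 < ρ) :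
    Continuous (ML3' α β ρ) := by
  rw [continuous_iff_continuousAt]
  intro z
  have hcont : ContinuousOn (fun w : ℝ => ∑' n : ℕ, Real.Gamma (ρ + n) * w ^ n /
      (Real.Gamma ρ * Real.Gamma (α * n + β) * n.factorial))
      (Set.Icc (-(|z|+1)) (|z|+1)) := by
    apply continuousOn_tsum (u := fun n : ℕ => Real.Gamma (ρ + n) * (|z|+1) ^ n /
        (Real.Gamma ρ * Real.Gamma (α * n + β) * n.factorial))
    · intro i
      exact ((continuous_const.mul (continuous_pow i)).div_const _).continuousOn
    · exact ML3_summable hα hβ hρ _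
    · intro n w hw
      rw [ML3'_norm_term hα hβ hρ]
      have hw' : |w| ≤ |z| + 1 := abs_le.2 ⟨hw.1, hw.2⟩
      have hD : (0:ℝ) < Real.Gamma ρ * Real.Gamma (α * n + β) * n.factorial := by
        have h1 : 0 < Real.Gamma ρ := Real.Gamma_pos_of_pos hρ
        have h2 : 0 < Real.Gamma (α * n + β) := Real.Gamma_pos_of_pos (by positivity)
        have h3 : (0:ℝ) < (n.factorial : ℝ) := by exact_mod_cast n.factorial_pos
        positivity
      have hP : 0 ≤ Real.Gamma (ρ + n) := (Real.Gamma_pos_of_pos (by positivity)).le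
      have hwn : |w| ^ n ≤ (|z| + 1) ^ n := pow_le_pow_left₀ (abs_nonneg w) hw' n
      gcongr
  refine hcont.continuousAt (Icc_mem_nhds ?_ ?_)
  · have := neg_abs_le z; linarith
  · have := le_abs_self z; linarith

section Volterra

open MeasureTheory Set

lemma volterra_fubini (a b f : ℝ → ℝ) (c x M : ℝ) (hcx : c ≤ x)
    (ha : Measurable a) (hb : Measurable b) (hf : Continuous f)
    (hfM : ∀ t, |f t| ≤ M)
    (hai : IntervalIntegrable a volume 0 (x - c))
    (hbi : IntervalIntegrable b volume 0 (x - c)) :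
    (∫ s in c..x, a (x - s) * ∫ t in c..s, b (s - t) * f t)
      = ∫ t in c..x, (∫ s in t..x, a (x - s) * b (s - t)) * f t := by
  have hM0 : 0 ≤ M := (abs_nonneg (f c)).trans (hfM c)
  set G : ℝ × ℝ → ℝ := fun p => a (x - p.1) * (b (p.1 - p.2) * f p.2) with hG
  set T : Set (ℝ × ℝ) := {p : ℝ × ℝ | p.2 ≤ p.1} with hT
  set F : ℝ × ℝ → ℝ := T.indicator G with hF
  set ν := volume.restrict (Set.Ioc c x) with hν
  -- measurability
  have hGm : Measurable G := by
    apply ((ha.comp (measurable_const.sub measurable_fst)).mul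
      ((hb.comp (measurable_fst.sub measurable_snd)).mul
        (hf.measurable.comp measurable_snd)))
  have hTm : MeasurableSet T := measurableSet_le measurable_snd measurable_fst
  have hFmeas : Measurable F := hGm.indicator hTm
  have hFm : AEStronglyMeasurable F (ν.prod ν) := hFmeas.aestronglyMeasurable
  -- kernel integrability, translated
  have hbs : ∀ s ∈ Set.Icc c x, IntervalIntegrable (fun t => b (s - t)) volume c s := by
    intro s hs
    have h0 : IntervalIntegrable b volume 0 (s - c) := by
      apply hbi.mono_set
      rw [Set.uIcc_of_le (by linarith [hs.1] : (0:ℝ) ≤ s - c),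
        Set.uIcc_of_le (by linarith : (0:ℝ) ≤ x - c)]
      exact Set.Icc_subset_Icc le_rfl (by linarith [hs.2])
    have := (h0.comp_sub_left s).symm
    simpa using this
  have haxs : IntervalIntegrable (fun s => a (x - s)) volume c x := by
    have := (hai.comp_sub_left x).symm
    simpa using this
  -- slicing in t : for s ∈ Ioc c x
  have hslice_t : ∀ s ∈ Set.Ioc c x,
      (fun t => F (s, t)) = (Set.Iic s).indicator (fun t => a (x - s) * (b (s - t) * f t)) := by
    intro s _
    funext t
    simp only [hF, hG, hT, Set.indicator_apply, Set.mem_setOf_eq, Set.mem_Iic]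
  have hIocIic : ∀ s ∈ Set.Ioc c x, Set.Ioc c x ∩ Set.Iic s = Set.Ioc c s := by
    intro s hs
    ext t
    simp only [Set.mem_inter_iff, Set.mem_Ioc, Set.mem_Iic]
    exact ⟨fun ⟨⟨h1, _⟩, h3⟩ => ⟨h1, h3⟩, fun ⟨h1, h2⟩ => ⟨⟨h1, h2.trans hs.2⟩, h2⟩⟩
  have hIocIci : ∀ t ∈ Set.Ioc c x, Set.Ioc c x ∩ Set.Ici t = Set.Icc t x := by
    intro t ht
    ext s
    simp only [Set.mem_inter_iff, Set.mem_Ioc, Set.mem_Icc, Set.mem_Ici]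
    exact ⟨fun ⟨⟨_, h2⟩, h3⟩ => ⟨h3, h2⟩, fun ⟨h1, h2⟩ => ⟨⟨lt_of_lt_of_le ht.1 h1, h2⟩, h1⟩⟩
  -- integrability of each t-slice
  have hslice_int : ∀ s ∈ Set.Ioc c x, Integrable (fun t => F (s, t)) ν := by
    intro s hs
    rw [hslice_t s hs, hν]
    rw [integrable_indicator_iff measurableSet_Iic, IntegrableOn,
      Measure.restrict_restrict measurableSet_Iic,
      show Set.Iic s ∩ Set.Ioc c x = Set.Ioc c s from by
        rw [Set.inter_comm]; exact hIocIic s hs]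
    apply Integrable.const_mul
    have hker : IntegrableOn (fun t => b (s - t)) (Set.Ioc c s) volume :=
      (intervalIntegrable_iff_integrableOn_Ioc_of_le hs.1.le).1
        (hbs s ⟨hs.1.le, hs.2⟩)
    have := hker.bdd_mul hf.aestronglyMeasurable.restrict
      (Filter.Eventually.of_forall fun t => by simpa [Real.norm_eq_abs] using hfM t)
    simpa [mul_comm] using this
  -- bound for the norm-integral in s
  have Cb : ℝ := 0
  set C : ℝ := ∫ u in (0:ℝ)..(x - c), |b u| with hC
  have hC0 : 0 ≤ C := intervalIntegral.integral_nonneg (by linarith) (fun u _ => abs_nonneg _)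
  have hnorm_bound : ∀ s ∈ Set.Ioc c x,
      (∫ t, ‖F (s, t)‖ ∂ν) ≤ |a (x - s)| * (M * C) := by
    intro s hs
    have hsc : c ≤ s := hs.1.le
    have e1 : (fun t => ‖F (s, t)‖)
        = (Set.Iic s).indicator (fun t => ‖a (x - s) * (b (s - t) * f t)‖) := by
      funext t
      rw [congrFun (hslice_t s hs) t, norm_indicator_eq_indicator_norm]
    rw [hν, e1, setIntegral_indicator measurableSet_Iic, hIocIic s hs]
    have hker : IntegrableOn (fun t => b (s - t)) (Set.Ioc c s) volume :=
      (intervalIntegrable_iff_integrableOn_Ioc_of_le hsc).1 (hbs s ⟨hsc, hs.2⟩)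
    have step1 : (∫ t in Set.Ioc c s, ‖a (x - s) * (b (s - t) * f t)‖)
        ≤ ∫ t in Set.Ioc c s, |a (x - s)| * (|b (s - t)| * M) := by
      apply setIntegral_mono_on
      · have : Integrable (fun t => b (s - t) * f t) (volume.restrict (Set.Ioc c s)) := by
          have := hker.bdd_mul hf.aestronglyMeasurable.restrict
            (Filter.Eventually.of_forall fun t => by simpa [Real.norm_eq_abs] using hfM t)
          simpa [mul_comm] using this
        exact (this.const_mul _).norm
      · exact (hker.norm.mul_const M).const_mul _
      · exact measurableSet_Ioc
      · intro t _
        rw [norm_mul, norm_mul, Real.norm_eq_abs, Real.norm_eq_abs, Real.norm_eq_abs]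
        have : |b (s - t)| * |f t| ≤ |b (s - t)| * M :=
          mul_le_mul_of_nonneg_left (hfM t) (abs_nonneg _)
        exact mul_le_mul_of_nonneg_left this (abs_nonneg _)
    have step2 : (∫ t in Set.Ioc c s, |a (x - s)| * (|b (s - t)| * M))
        = |a (x - s)| * M * ∫ t in Set.Ioc c s, |b (s - t)| := by
      rw [← MeasureTheory.integral_const_mul]
      congr 1; funext t; ring
    have step3 : (∫ t in Set.Ioc c s, |b (s - t)|) ≤ C := by
      have e2 : (∫ t in Set.Ioc c s, |b (s - t)|) = ∫ t in c..s, |b (s - t)| :=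
        (intervalIntegral.integral_of_le hsc).symm
      rw [e2, intervalIntegral.integral_comp_sub_left (fun u => |b u|) s, sub_self]
      apply intervalIntegral.integral_mono_interval le_rfl (by linarith) (by linarith [hs.2])
      · exact Filter.Eventually.of_forall fun u => abs_nonneg _
      · exact hbi.norm
    calc (∫ t in Set.Ioc c s, ‖a (x - s) * (b (s - t) * f t)‖)
        ≤ |a (x - s)| * M * ∫ t in Set.Ioc c s, |b (s - t)| := by
          rw [← step2]; exact step1
      _ ≤ |a (x - s)| * M * C := by
          apply mul_le_mul_of_nonneg_left step3 (by positivity)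
      _ = |a (x - s)| * (M * C) := by ring
  -- integrability on the product
  have hInt : Integrable F (ν.prod ν) := by
    rw [integrable_prod_iff hFm]
    constructor
    · rw [hν, ae_restrict_iff' measurableSet_Ioc]
      exact Filter.Eventually.of_forall fun s hs => hslice_int s hs
    · apply Integrable.mono (g := fun s => |a (x - s)| * (M * C))
      · have h1 : IntegrableOn (fun s => |a (x - s)|) (Set.Ioc c x) volume :=
          (intervalIntegrable_iff_integrableOn_Ioc_of_le hcx).1 haxs.norm
        exact h1.mul_const (M * C)
      · exact hFm.norm.integral_prod_right'
      · rw [hν, ae_restrict_iff' measurableSet_Ioc]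
        apply Filter.Eventually.of_forall
        intro s hs
        have hpos : 0 ≤ ∫ t, ‖F (s, t)‖ ∂ν :=
          integral_nonneg fun t => norm_nonneg _
        rw [Real.norm_eq_abs, abs_of_nonneg hpos, Real.norm_eq_abs, abs_of_nonneg (by positivity)]
        exact hnorm_bound s hs
  -- evaluate both iterated integrals
  have hswap := integral_integral_swap (f := fun s t => F (s, t)) (μ := ν) (ν := ν) hInt
  have hLHS : (∫ s, ∫ t, F (s, t) ∂ν ∂ν)
      = ∫ s in c..x, a (x - s) * ∫ t in c..s, b (s - t) * f t := by
    rw [intervalIntegral.integral_of_le hcx, hν]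
    apply setIntegral_congr_fun measurableSet_Ioc
    intro s hs
    beta_reduce
    rw [hslice_t s hs, setIntegral_indicator measurableSet_Iic, hIocIic s hs,
      MeasureTheory.integral_const_mul, intervalIntegral.integral_of_le hs.1.le]
  have hRHS : (∫ t, ∫ s, F (s, t) ∂ν ∂ν)
      = ∫ t in c..x, (∫ s in t..x, a (x - s) * b (s - t)) * f t := by
    rw [intervalIntegral.integral_of_le hcx, hν]
    apply setIntegral_congr_fun measurableSet_Ioc
    intro t ht
    beta_reduce
    have hslice_s : (fun s => F (s, t))
        = (Set.Ici t).indicator (fun s => (a (x - s) * b (s - t)) * f t) := by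
      funext s
      simp only [hF, hG, hT, Set.indicator_apply, Set.mem_setOf_eq, Set.mem_Ici, mul_assoc]
    rw [hslice_s, setIntegral_indicator measurableSet_Ici, hIocIci t ht,
      integral_Icc_eq_integral_Ioc, ← intervalIntegral.integral_of_le ht.2,
      intervalIntegral.integral_mul_const]
  rw [← hLHS, ← hRHS]
  exact hswap

end Volterra

lemma ML3'_nonneg {α β ρ : ℝ} (hα : 0 < α) (hβ : 0 < β) (hρ : 0 < ρ) {R : ℝ} (hR : 0 ≤ R) :
    0 ≤ ML3' α β ρ R := by
  apply tsum_nonneg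
  intro n
  have hP : 0 < Real.Gamma (ρ + n) := Real.Gamma_pos_of_pos (by positivity)
  have h1 : 0 < Real.Gamma ρ := Real.Gamma_pos_of_pos hρ
  have h2 : 0 < Real.Gamma (α * n + β) := Real.Gamma_pos_of_pos (by positivity)
  have h3 : (0:ℝ) < (n.factorial : ℝ) := by exact_mod_cast n.factorial_pos
  positivity

lemma volterra_comm (a b f : ℝ → ℝ) (c x M : ℝ) (hcx : c ≤ x)
    (ha : Measurable a) (hb : Measurable b) (hf : Continuous f)
    (hfM : ∀ t, |f t| ≤ M)
    (hai : IntervalIntegrable a volume 0 (x - c))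
    (hbi : IntervalIntegrable b volume 0 (x - c)) :
    (∫ s in c..x, a (x - s) * ∫ t in c..s, b (s - t) * f t)
      = ∫ s in c..x, b (x - s) * ∫ t in c..s, a (s - t) * f t := by
  rw [volterra_fubini a b f c x M hcx ha hb hf hfM hai hbi,
    volterra_fubini b a f c x M hcx hb ha hf hfM hbi hai]
  apply intervalIntegral.integral_congr
  intro t _
  beta_reduce
  have key : (∫ s in t..x, a (x - s) * b (s - t)) = ∫ s in t..x, b (x - s) * a (s - t) := by
    have h := intervalIntegral.integral_comp_sub_left (a := t) (b := x)
      (fun u => b (x - u) * a (u - t)) (x + t)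
    simp only [show ∀ s : ℝ, x - (x + t - s) = s - t from fun s => by ring,
      show ∀ s : ℝ, x + t - s - t = x - s from fun s => by ring,
      show x + t - x = t from by ring, show x + t - t = x from by ring] at h
    rw [← h]
    apply intervalIntegral.integral_congr
    intro s _
    exact mul_comm _ _
  rw [key]

theorem RL_commutes_Prab (c d α β ρ ω μ : ℝ)
    (hα : 0 < α) (hβ : 0 < β) (hρ : 0 < ρ) (hμ : 0 < μ)
    (f : ℝ → ℝ) (hf : ContinuousOn f (Set.Icc c d)) :
    ∀ x ∈ Set.Icc c d, RL c μ (Prab α β ω ρ c f) x = Prab α β ω ρ c (RL c μ f) x := by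
  intro x hx
  have hcx : c ≤ x := hx.1
  have hxd : x ≤ d := hx.2
  have hcd : c ≤ d := hcx.trans hxd
  have hL : (0:ℝ) ≤ x - c := by linarith
  -- a globally continuous bounded extension of `f`
  set g : ℝ → ℝ := Set.IccExtend hcd (Set.restrict (Set.Icc c d) f) with hgdef
  have hg : Continuous g := hf.restrict.Icc_extend'
  have hgf : ∀ t ∈ Set.Icc c d, g t = f t := fun t ht => Set.IccExtend_of_mem hcd _ ht
  obtain ⟨M, hM⟩ := isCompact_Icc.exists_bound_of_continuousOn hf
  have hgM : ∀ t, |g t| ≤ M := by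
    intro t
    have h1 : g t = f (Set.projIcc c d hcd t) := rfl
    rw [h1]
    simpa [Real.norm_eq_abs] using hM _ (Set.projIcc c d hcd t).2
  -- continuity of ML3
  have hML3c : Continuous (ML3 α β ρ) := ML3'_continuous hα hβ hρ
  -- measurability of kernels
  have hAm : Measurable (fun u : ℝ => 1 / Real.Gamma μ * u ^ (μ - 1)) := by fun_prop
  have hBm : Measurable (fun u : ℝ => u ^ (β - 1) * ML3 α β ρ (ω * u ^ α)) := by
    have h1 : Measurable (fun u : ℝ => u ^ (β - 1)) := by fun_prop
    have h2 : Measurable (fun u : ℝ => ω * u ^ α) := by fun_prop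
    exact h1.mul (hML3c.measurable.comp h2)
  -- integrability of kernels
  have hAint : IntervalIntegrable (fun u : ℝ => 1 / Real.Gamma μ * u ^ (μ - 1))
      volume 0 (x - c) := by
    exact ((intervalIntegrable_rpow' (by linarith)).const_mul _)
  have hBint : IntervalIntegrable (fun u : ℝ => u ^ (β - 1) * ML3 α β ρ (ω * u ^ α))
      volume 0 (x - c) := by
    set K : ℝ := ML3' α β ρ (|ω| * (x - c) ^ α) with hK
    have hK0 : 0 ≤ K := ML3'_nonneg hα hβ hρ (by positivity)
    rw [intervalIntegrable_iff_integrableOn_Ioc_of_le hL]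
    apply Integrable.mono (g := fun u => K * u ^ (β - 1))
    · exact ((intervalIntegrable_rpow' (by linarith : (-1:ℝ) < β - 1)).const_mul K).1
    · exact hBm.aestronglyMeasurable.restrict
    · rw [ae_restrict_iff' measurableSet_Ioc]
      apply Filter.Eventually.of_forall
      intro u hu
      have hu0 : 0 < u := hu.1
      have hupow : (0:ℝ) ≤ u ^ (β - 1) := Real.rpow_nonneg hu0.le _
      have habs : |ω * u ^ α| ≤ |ω| * (x - c) ^ α := by
        rw [abs_mul, abs_of_nonneg (Real.rpow_nonneg hu0.le α)]
        exact mul_le_mul_of_nonneg_left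
          (Real.rpow_le_rpow hu0.le hu.2 hα.le) (abs_nonneg ω)
      have hMLb : |ML3 α β ρ (ω * u ^ α)| ≤ K := ML3'_abs_le hα hβ hρ habs
      rw [Real.norm_eq_abs, Real.norm_eq_abs, abs_mul, abs_of_nonneg hupow,
        abs_of_nonneg (by positivity : (0:ℝ) ≤ K * u ^ (β - 1)), mul_comm K]
      exact mul_le_mul_of_nonneg_left hMLb hupow
  -- the core commutation for the extension g
  have key := volterra_comm (fun u => 1 / Real.Gamma μ * u ^ (μ - 1))
    (fun u => u ^ (β - 1) * ML3 α β ρ (ω * u ^ α)) g c x M hcx hAm hBm hg hgM hAint hBint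
  -- identify the left side
  have eL : RL c μ (Prab α β ω ρ c g) x
      = ∫ s in c..x, (1 / Real.Gamma μ * (x - s) ^ (μ - 1)) *
          ∫ t in c..s, ((s - t) ^ (β - 1) * ML3 α β ρ (ω * (s - t) ^ α)) * g t := by
    rw [RL, ← intervalIntegral.integral_const_mul]
    apply intervalIntegral.integral_congr
    intro s _
    beta_reduce
    rw [Prab]
    simp only [mul_assoc]
  have eR : Prab α β ω ρ c (RL c μ g) x
      = ∫ s in c..x, ((x - s) ^ (β - 1) * ML3 α β ρ (ω * (x - s) ^ α)) *
          ∫ t in c..s, (1 / Real.Gamma μ * (s - t) ^ (μ - 1)) * g t := by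
    rw [Prab]
    apply intervalIntegral.integral_congr
    intro s _
    beta_reduce
    rw [RL, ← intervalIntegral.integral_const_mul]
    simp only [mul_assoc]
  -- replace f by g
  have hPrabfg : RL c μ (Prab α β ω ρ c f) x = RL c μ (Prab α β ω ρ c g) x := by
    rw [RL, RL]
    congr 1
    apply intervalIntegral.integral_congr
    intro s hs
    beta_reduce
    rw [Set.uIcc_of_le hcx] at hs
    congr 1
    simp only [Prab]
    apply intervalIntegral.integral_congr
    intro t ht
    beta_reduce
    rw [Set.uIcc_of_le hs.1] at ht
    have : t ∈ Set.Icc c d := ⟨ht.1, ht.2.trans (hs.2.trans hxd)⟩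
    rw [hgf t this]
  have hRLfg : Prab α β ω ρ c (RL c μ f) x = Prab α β ω ρ c (RL c μ g) x := by
    rw [Prab, Prab]
    apply intervalIntegral.integral_congr
    intro s hs
    beta_reduce
    rw [Set.uIcc_of_le hcx] at hs
    congr 1
    simp only [RL]
    congr 1
    apply intervalIntegral.integral_congr
    intro t ht
    beta_reduce
    rw [Set.uIcc_of_le hs.1] at ht
    have : t ∈ Set.Icc c d := ⟨ht.1, ht.2.trans (hs.2.trans hxd)⟩
    rw [hgf t this]
  rw [hPrabfg, hRLfg, eL, eR]
  exact key
end
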